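/- Let S be a metric space, A a type, γ ∈ (0,1), L > 0, and ε > 0. Let Q : S × A → ℝ, r : S × A → ℝ, V : S → ℝ, f : S × A → S satisfy Q(s,a) = r(s,a) + γ·V(f(s,a)) for all s, a, and suppose V is reverse Lipschitz with constant L, i.e. |V(s₁) − V(s₂)| > L·dist(s₁, s₂) for all s₁ ≠ s₂. Let Q̂ : S × A → ℝ and V̂ : S → ℝ satisfy |Q̂(s,a) − Q(s,a)| ≤ ε for all s, a and |V̂(x) − V(x)| ≤ ε for all x. If, for given s ∈ S and a ∈ A, the point ŝ' ∈ S satisfies V̂(ŝ') = (Q̂(s,a) − r(s,a))/γ, then dist(f(s,a), ŝ') < ((1 + γ)/(γ·L))·ε. -/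

import Mathlib

/-- Theorem 1: with an ε-accurate value function whose true counterpart is reverse
Lipschitz with constant `L`, any state `ŝ'` whose estimated value matches the scanned
value lies within `((1 + γ) / (γ * L)) * ε` of the true successor state. -/
theorem stmt_2 {S A : Type*} [MetricSpace S] (γ L ε : ℝ)
    (hγ0 : 0 < γ) (hγ1 : γ < 1) (hL : 0 < L) (hε : 0 < ε)
    (Q r : S × A → ℝ) (V : S → ℝ) (f : S × A → S)
    (hbell : ∀ s a, Q (s, a) = r (s, a) + γ * V (f (s, a)))
    (hrev : ∀ s₁ s₂ : S, s₁ ≠ s₂ → L * dist s₁ s₂ < |V s₁ - V s₂|)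
    (Qhat : S × A → ℝ) (Vhat : S → ℝ)
    (hQ : ∀ s a, |Qhat (s, a) - Q (s, a)| ≤ ε)
    (hVe : ∀ x, |Vhat x - V x| ≤ ε)
    (s : S) (a : A) (shat : S)
    (hshat : Vhat shat = (Qhat (s, a) - r (s, a)) / γ) :
    dist (f (s, a)) shat < ((1 + γ) / (γ * L)) * ε := by
  set s' := f (s, a) with hs'
  have hVs' : V s' = (Q (s, a) - r (s, a)) / γ := by
    rw [hbell]; field_simp; rw [hs']; ring
  have h1 : |Vhat shat - V s'| ≤ ε / γ := by
    rw [hshat, hVs', div_sub_div_same, abs_div, abs_of_pos hγ0]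
    have hnum : |Qhat (s, a) - r (s, a) - (Q (s, a) - r (s, a))| ≤ ε := by
      have := hQ s a
      calc |Qhat (s, a) - r (s, a) - (Q (s, a) - r (s, a))|
          = |Qhat (s, a) - Q (s, a)| := by ring_nf
        _ ≤ ε := this
    gcongr
  have h2 : |V shat - V s'| ≤ ε + ε / γ := by
    have := hVe shat
    calc |V shat - V s'| = |-(Vhat shat - V shat) + (Vhat shat - V s')| := by ring_nf
      _ ≤ |-(Vhat shat - V shat)| + |Vhat shat - V s'| := abs_add_le _ _
      _ ≤ ε + ε / γ := add_le_add (by rwa [abs_neg]) h1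
  have hrhs : ((1 + γ) / (γ * L)) * ε = (ε + ε / γ) / L := by field_simp; ring
  rw [hrhs]
  by_cases h : s' = shat
  · rw [h, dist_self]
    positivity
  · have := hrev s' shat h
    have h3 : L * dist s' shat < ε + ε / γ := this.trans_le (by rwa [abs_sub_comm])
    rw [lt_div_iff₀ hL]
    linarith [h3]
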